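/- For f in Cvx₀(ℝⁿ) (nonnegative, even, convex, f(0)=0) and its polar transform f°(x) = sup_y (⟨x,y⟩ − 1)/f(y), it holds for all λ > 0 that {f° > λ} = λ · {Lf > 1/λ}, where Lf is the Legendre transform of f. -/

import Mathlib

open Set Pointwise MeasureTheory
open scoped Classical

/-- Ratio `a / b` with the conventions `0/0 = 0` (more generally `a/0 = 0` for `a ≤ 0`)
and `a/0 = +∞` for `a > 0`, valued in `EReal`. -/
noncomputable def eratio (a b : ℝ) : EReal :=
  if b = 0 then (if 0 < a then (⊤ : EReal) else 0) else ((a / b : ℝ) : EReal)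

/-- Legendre transform `Lf(x) = sup_y (⟨x,y⟩ − f(y))`, valued in `EReal`. -/
noncomputable def legendre {n : ℕ} (f : EuclideanSpace ℝ (Fin n) → ℝ)
    (x : EuclideanSpace ℝ (Fin n)) : EReal :=
  ⨆ y : EuclideanSpace ℝ (Fin n), ((inner ℝ x y - f y : ℝ) : EReal)

/-- Polar transform `f°(x) = sup_y (⟨x,y⟩ − 1)/f(y)` (with `0° = 0`). -/
noncomputable def polarTransform {n : ℕ} (f : EuclideanSpace ℝ (Fin n) → ℝ)
    (x : EuclideanSpace ℝ (Fin n)) : EReal :=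
  if f = fun _ => (0 : ℝ) then 0
  else ⨆ y : EuclideanSpace ℝ (Fin n), eratio (inner ℝ x y - 1) (f y)

lemma eratio_lt_iff (lam a b : ℝ) (hlam : 0 < lam) (hb : 0 ≤ b) :
    (lam : EReal) < eratio a b ↔ lam * b < a := by
  unfold eratio
  split_ifs with h h'
  · simp only [h, mul_zero]
    constructor
    · intro _; exact h'
    · intro _; exact EReal.coe_lt_top lam
  · simp only [h, mul_zero]
    constructor
    · intro hc
      exact absurd hc (not_lt.mpr (by exact_mod_cast hlam.le))
    · intro hc; exact absurd hc h'
  · rw [EReal.coe_lt_coe_iff, lt_div_iff₀ (lt_of_le_of_ne hb (Ne.symm h))]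

theorem polarTransform_superlevel_eq_smul {n : ℕ}
    (f : EuclideanSpace ℝ (Fin n) → ℝ) (hconv : ConvexOn ℝ Set.univ f)
    (heven : ∀ x, f (-x) = f x) (hnonneg : ∀ x, 0 ≤ f x) (hf0 : f 0 = 0)
    (hfne : f ≠ fun _ => (0 : ℝ)) (lam : ℝ) (hlam : 0 < lam) :
    {x | (lam : EReal) < polarTransform f x} =
      lam • {x | ((1 / lam : ℝ) : EReal) < legendre f x} := by
  ext x
  rw [mem_smul_set_iff_inv_smul_mem₀ hlam.ne']
  simp only [mem_setOf_eq, polarTransform, legendre, if_neg hfne, lt_iSup_iff]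
  constructor
  · rintro ⟨y, hy⟩
    rw [eratio_lt_iff _ _ _ hlam (hnonneg y)] at hy
    refine ⟨y, ?_⟩
    rw [EReal.coe_lt_coe_iff, real_inner_smul_left]
    rw [div_lt_iff₀ hlam]
    have : (lam⁻¹ * inner ℝ x y - f y) * lam = inner ℝ x y - f y * lam := by
      field_simp
    rw [this]; linarith
  · rintro ⟨y, hy⟩
    rw [EReal.coe_lt_coe_iff, real_inner_smul_left, div_lt_iff₀ hlam] at hy
    refine ⟨y, ?_⟩
    rw [eratio_lt_iff _ _ _ hlam (hnonneg y)]
    have : (lam⁻¹ * inner ℝ x y - f y) * lam = inner ℝ x y - f y * lam := by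
      field_simp
    rw [this] at hy; linarith
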